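/- Let M be a loopless matroid on a finite ground set E, and let |B(M)| ⊆ ℝ^E denote the union of the cones 𝔠_𝓕 over all flags of flats 𝓕 of M. Then for every nonempty subset F ⊆ E, the set F is a flat of M if and only if the indicator vector e_F lies in |B(M)|. In particular, the matroid M is determined by the underlying set of its Bergman fan. -/

import Mathlib

open scoped BigOperators

/-- The `0-1` indicator vector `e_F ∈ ℝ^E` of a subset `F ⊆ E`. -/
noncomputable def eVec {α : Type*} (F : Set α) : α → ℝ := F.indicator 1

/-- A flag of flats `∅ = F_0 ⊊ F_1 ⊊ ⋯ ⊊ F_d = E` of a matroid `M`. -/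
def IsFlag {α : Type*} (M : Matroid α) (d : ℕ) (𝓕 : Fin (d + 1) → Set α) : Prop :=
  (∀ j, M.IsFlat (𝓕 j)) ∧ StrictMono 𝓕 ∧ 𝓕 0 = ∅ ∧ 𝓕 (Fin.last d) = M.E

/-- The cone `𝔠_𝓕 = { Σ_j λ_j e_{F_j} : λ_j ≥ 0 for j = 1, …, d−1 }` of a flag. -/
def flagCone {α : Type*} (d : ℕ) (𝓕 : Fin (d + 1) → Set α) : Set (α → ℝ) :=
  { x | ∃ lam : Fin (d + 1) → ℝ,
      (∀ j : Fin (d + 1), (j : ℕ) ≠ 0 → (j : ℕ) ≠ d → 0 ≤ lam j) ∧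
      x = ∑ j, lam j • eVec (𝓕 j) }

/-- The underlying set `|B(M)| = ⋃_𝓕 𝔠_𝓕` of the Bergman fan of `M`: the union of
the cones of all flags of flats of `M`. -/
def bergmanSet {α : Type*} (M : Matroid α) : Set (α → ℝ) :=
  ⋃ (d : ℕ) (𝓕 : Fin (d + 1) → Set α) (_ : IsFlag M d 𝓕), flagCone d 𝓕

/-- If the indicator vector of a nonempty set `F` lies in the cone of a flag of flats of a
matroid `M` with ground set `univ`, then `F` is a flat of `M`. -/
lemma flat_of_mem_flagCone {α : Type*} [Fintype α] (M : Matroid α)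
    (hE : M.E = Set.univ) {d : ℕ} {𝓕 : Fin (d + 1) → Set α} (hflag : IsFlag M d 𝓕)
    {F : Set α} (hF : F.Nonempty) (hx : eVec F ∈ flagCone d 𝓕) : M.IsFlat F := by
  classical
  obtain ⟨hflats, hmono, h0, hlast⟩ := hflag
  obtain ⟨lam, hlam, hsum⟩ := hx
  -- membership in the flag is upward closed
  have hup : ∀ (i : α) (a b : Fin (d + 1)), a ≤ b → i ∈ 𝓕 a → i ∈ 𝓕 b :=
    fun i a b hab h => hmono.monotone hab h
  have hlastmem : ∀ i : α, i ∈ 𝓕 (Fin.last d) := by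
    rw [hlast, hE]; intro i; trivial
  -- the least index whose flat contains `i`
  set m : α → Fin (d + 1) := fun i =>
    (Finset.univ.filter (fun j => i ∈ 𝓕 j)).min'
      ⟨Fin.last d, by simp [hlastmem i]⟩ with hm
  have hm_mem : ∀ i, i ∈ 𝓕 (m i) := by
    intro i
    have := Finset.min'_mem (Finset.univ.filter (fun j => i ∈ 𝓕 j))
      ⟨Fin.last d, by simp [hlastmem i]⟩
    simpa using this
  have hm_le : ∀ i j, i ∈ 𝓕 j → m i ≤ j := by
    intro i j hj
    exact Finset.min'_le _ _ (by simp [hj])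
  have hmem_iff : ∀ i j, i ∈ 𝓕 j ↔ m i ≤ j := by
    intro i j
    exact ⟨hm_le i j, fun h => hup i (m i) j h (hm_mem i)⟩
  have hm1 : ∀ i, 1 ≤ ((m i : Fin (d + 1)) : ℕ) := by
    intro i
    by_contra h
    have h0' : m i = 0 := by
      apply Fin.ext
      simp only [Fin.val_zero]
      omega
    have := hm_mem i
    rw [h0', h0] at this
    exact this
  -- the partial sums
  set S : Fin (d + 1) → ℝ := fun k => ∑ j ∈ Finset.univ.filter (fun j => k ≤ j), lam j with hS
  have hxi : ∀ i, eVec F i = S (m i) := by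
    intro i
    have h1 : eVec F i = ∑ j, lam j * eVec (𝓕 j) i := by
      rw [hsum]
      simp [Finset.sum_apply]
    have h2 : ∀ j, lam j * eVec (𝓕 j) i = if m i ≤ j then lam j else 0 := by
      intro j
      by_cases hij : i ∈ 𝓕 j
      · rw [if_pos ((hmem_iff i j).1 hij)]
        simp [eVec, Set.indicator_of_mem hij]
      · rw [if_neg (fun h => hij ((hmem_iff i j).2 h))]
        simp [eVec, Set.indicator_of_notMem hij]
    rw [h1]
    simp only [h2]
    rw [hS]
    exact (Finset.sum_filter _ _).symm
  -- `S` is nonincreasing on indices `≥ 1`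
  have hSmono : ∀ a b : Fin (d + 1), 1 ≤ (a : ℕ) → a ≤ b → S b ≤ S a := by
    intro a b ha hab
    apply Finset.sum_le_sum_of_subset_of_nonneg
    · intro j hj
      simp only [Finset.mem_filter, Finset.mem_univ, true_and] at hj ⊢
      exact le_trans hab hj
    · intro j hj hj'
      simp only [Finset.mem_filter, Finset.mem_univ, true_and] at hj hj'
      apply hlam
      · have : (a : ℕ) ≤ (j : ℕ) := hj
        omega
      · have hjb : (j : ℕ) < (b : ℕ) := by
          by_contra h
          exact hj' (by exact Fin.le_def.2 (by omega))
        have : (b : ℕ) ≤ d := Fin.is_le b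
        omega
  obtain ⟨i₀, hi₀⟩ := hF
  have hS1 : S (m i₀) = 1 := by
    rw [← hxi]
    simp [eVec, Set.indicator_of_mem hi₀]
  set K : Finset (Fin (d + 1)) := Finset.univ.filter (fun k => S k = 1) with hK
  have hKne : K.Nonempty := ⟨m i₀, by simp [hK, hS1]⟩
  set t := K.max' hKne with ht
  have htS : S t = 1 := by
    have := K.max'_mem hKne
    simp [hK] at this
    exact this
  have ht1 : 1 ≤ (t : ℕ) := by
    have hle : m i₀ ≤ t := K.le_max' _ (by simp [hK, hS1])
    exact le_trans (hm1 i₀) hle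
  have hFeq : F = 𝓕 t := by
    ext i
    constructor
    · intro hi
      have hSi : S (m i) = 1 := by
        rw [← hxi]
        simp [eVec, Set.indicator_of_mem hi]
      have : m i ≤ t := K.le_max' _ (by simp [hK, hSi])
      exact (hmem_iff i t).2 this
    · intro hi
      have hmt : m i ≤ t := (hmem_iff i t).1 hi
      have h1 : (1 : ℝ) ≤ S (m i) := htS ▸ hSmono (m i) t (hm1 i) hmt
      by_contra hiF
      have h0' : eVec F i = 0 := Set.indicator_of_notMem hiF _
      rw [hxi i] at h0'
      linarith
  rw [hFeq]
  exact hflats t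

/-- Characterization of nonempty flats via the Bergman fan. -/
lemma flat_iff_mem_bergmanSet_aux {α : Type*} [Fintype α] (M : Matroid α)
    (hE : M.E = Set.univ) (hloopless : M.IsFlat ∅) {F : Set α} (hF : F.Nonempty) :
    M.IsFlat F ↔ eVec F ∈ bergmanSet M := by
  constructor
  · intro hflat
    have hground : M.IsFlat Set.univ := hE ▸ M.ground_isFlat
    have huniv_ne : (Set.univ : Set α).Nonempty := ⟨hF.choose, trivial⟩
    by_cases hFU : F = Set.univ
    · -- use the flag `∅ ⊊ univ`
      refine Set.mem_iUnion.2 ⟨1, Set.mem_iUnion.2 ⟨![∅, Set.univ],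
        Set.mem_iUnion.2 ⟨⟨?_, ?_, rfl, ?_⟩, ⟨![0, 1], ?_, ?_⟩⟩⟩⟩
      · intro j; fin_cases j <;> simpa using by first | exact hloopless | exact hground
      · intro a b hab
        fin_cases a <;> fin_cases b <;>
          simp_all [Set.empty_ssubset, huniv_ne]
      · show (Set.univ : Set α) = M.E
        rw [hE]
      · intro j h0 h1
        fin_cases j <;> simp_all
      · rw [hFU]
        simp [Fin.sum_univ_two, eVec]
    · -- use the flag `∅ ⊊ F ⊊ univ`
      refine Set.mem_iUnion.2 ⟨2, Set.mem_iUnion.2 ⟨![∅, F, Set.univ],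
        Set.mem_iUnion.2 ⟨⟨?_, ?_, rfl, ?_⟩, ⟨![0, 1, 0], ?_, ?_⟩⟩⟩⟩
      · intro j; fin_cases j <;>
          simpa using by first | exact hloopless | exact hflat | exact hground
      · have h1 : (∅ : Set α) ⊂ F := Set.empty_ssubset.2 hF
        have h2 : F ⊂ Set.univ := Ne.lt_of_le hFU (Set.subset_univ F)
        have h3 : (∅ : Set α) ⊂ Set.univ := Set.empty_ssubset.2 huniv_ne
        intro a b hab
        fin_cases a <;> fin_cases b <;> simp_all
      · show (Set.univ : Set α) = M.E
        rw [hE]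
      · intro j h0 h2
        fin_cases j <;> simp_all
      · funext i
        simp [Fin.sum_univ_three, eVec]
  · intro hmem
    obtain ⟨_, ⟨⟨d, rfl⟩, _, ⟨⟨𝓕, rfl⟩, _, ⟨⟨hflag, rfl⟩, hx⟩⟩⟩⟩ := hmem
    exact flat_of_mem_flagCone M hE hflag hF hx

/-- For a loopless matroid `M` on a finite ground set `E`, a nonempty subset
`F ⊆ E` is a flat if and only if `e_F ∈ |B(M)|`; in particular `M` is determined by
the underlying set of its Bergman fan. -/
theorem flat_iff_mem_bergmanSet {α : Type*} [Fintype α] (M : Matroid α)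
    (hE : M.E = Set.univ) (hloopless : M.IsFlat ∅) :
    (∀ F : Set α, F.Nonempty → (M.IsFlat F ↔ eVec F ∈ bergmanSet M)) ∧
    (∀ M' : Matroid α, M'.E = Set.univ → M'.IsFlat ∅ →
      bergmanSet M = bergmanSet M' → M = M') := by
  constructor
  · intro F hF
    exact flat_iff_mem_bergmanSet_aux M hE hloopless hF
  · intro M' hE' hloopless' hb
    have hflat : ∀ F : Set α, M.IsFlat F ↔ M'.IsFlat F := by
      intro F
      rcases F.eq_empty_or_nonempty with rfl | hF
      · exact ⟨fun _ => hloopless', fun _ => hloopless⟩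
      · rw [flat_iff_mem_bergmanSet_aux M hE hloopless hF,
          flat_iff_mem_bergmanSet_aux M' hE' hloopless' hF, hb]
    apply Matroid.ext_closure
    intro X
    rw [Matroid.closure_def, Matroid.closure_def, hE, hE']
    have hsets : {F | M.IsFlat F ∧ X ∩ Set.univ ⊆ F} = {F | M'.IsFlat F ∧ X ∩ Set.univ ⊆ F} := by
      ext G
      simp only [Set.mem_setOf_eq, hflat G]
    rw [hsets]
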